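/- Let Y, U ∈ V be orthonormal (⟨Y,Y⟩ = ⟨U,U⟩ = 1, ⟨Y,U⟩ = 0) and let W ∈ V be arbitrary. Then g_Y(W,U) = 2⟨W,U⟩/(1 − ⟨Y,X⟩)² + (1 − ⟨Y,X⟩)^{-4}·{ ⟨W,Y⟩⟨U,X⟩ + 3⟨W,X⟩⟨U,X⟩ − ⟨W,U⟩ + ⟨Y,X⟩⟨W,U⟩ − 4⟨Y,X⟩⟨W,Y⟩⟨U,X⟩ }. -/

import Mathlib

open scoped RealInnerProductSpace

/-- The Matsumoto metric `F(y) = ⟨y,y⟩ / (√⟨y,y⟩ − ⟨X,y⟩)` associated to the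
vector `X` of an inner product space. -/
noncomputable def matsumotoF {V : Type*} [NormedAddCommGroup V] [InnerProductSpace ℝ V]
    (X y : V) : ℝ :=
  ⟪y, y⟫ / (Real.sqrt ⟪y, y⟫ - ⟪X, y⟫)

/-- The fundamental tensor of the Matsumoto metric:
`g_Y(U,W) = (1/2)·∂²/∂s∂t [F²(Y + sU + tW)]` at `s = t = 0`. -/
noncomputable def matsumotoG {V : Type*} [NormedAddCommGroup V] [InnerProductSpace ℝ V]
    (X Y U W : V) : ℝ :=
  (1 / 2) * deriv (fun s : ℝ =>
    deriv (fun t : ℝ => (matsumotoF X (Y + s • U + t • W)) ^ 2) 0) 0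

/-- Inner derivative of the squared Matsumoto metric along a line. -/
lemma matsumoto_inner_deriv {V : Type*} [NormedAddCommGroup V] [InnerProductSpace ℝ V]
    (X y U : V) {A B c d uu : ℝ}
    (hA : ⟪y, y⟫ = A) (hB : ⟪X, y⟫ = B) (hc : ⟪y, U⟫ = c) (hd : ⟪X, U⟫ = d)
    (huu : ⟪U, U⟫ = uu) (hApos : 0 < A) (hden : 0 < Real.sqrt A - B) :
    deriv (fun t : ℝ => (matsumotoF X (y + t • U)) ^ 2) 0 =
      (4 * A * c * (Real.sqrt A - B) ^ 2
        - A ^ 2 * (2 * (Real.sqrt A - B) * (c / Real.sqrt A - d)))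
      / ((Real.sqrt A - B) ^ 2) ^ 2 := by
  have hAne : A ≠ 0 := hApos.ne'
  have hsA : Real.sqrt A ≠ 0 := (Real.sqrt_pos.mpr hApos).ne'
  have hfun : (fun t : ℝ => (matsumotoF X (y + t • U)) ^ 2)
      = fun t : ℝ => (A + 2 * c * t + uu * t ^ 2) ^ 2
        / (Real.sqrt (A + 2 * c * t + uu * t ^ 2) - (B + d * t)) ^ 2 := by
    funext t
    have h1 : ⟪y + t • U, y + t • U⟫ = A + 2 * c * t + uu * t ^ 2 := by
      simp only [inner_add_left, inner_add_right, real_inner_smul_left, real_inner_smul_right]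
      have hUy : (inner ℝ U y : ℝ) = c := by rw [real_inner_comm]; exact hc
      rw [hA]
      linear_combination t * hUy + t * hc + t^2 * huu
    have h2 : ⟪X, y + t • U⟫ = B + d * t := by
      simp only [inner_add_right, real_inner_smul_right]
      rw [hB, hd]; ring
    rw [matsumotoF, h1, h2, div_pow]
  rw [hfun]
  have ha : HasDerivAt (fun t : ℝ => A + 2 * c * t + uu * t ^ 2) (2 * c) 0 := by
    have h := (((hasDerivAt_id' (0:ℝ)).const_mul (2 * c)).const_add A).add
      ((hasDerivAt_pow 2 (0:ℝ)).const_mul uu)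
    refine h.congr_deriv (Eq.symm ?_)
    norm_num
  have ha0 : A + 2 * c * 0 + uu * 0 ^ 2 = A := by ring
  have hsq : HasDerivAt (fun t : ℝ => Real.sqrt (A + 2 * c * t + uu * t ^ 2))
      (c / Real.sqrt A) 0 := by
    have h := ha.sqrt (by rw [ha0]; exact hAne)
    rw [ha0] at h
    convert h using 1
    field_simp
  have hb : HasDerivAt (fun t : ℝ => B + d * t) d 0 := by
    have h := ((hasDerivAt_id' (0:ℝ)).const_mul d).const_add B
    simpa using h
  have hdenD : HasDerivAt
      (fun t : ℝ => Real.sqrt (A + 2 * c * t + uu * t ^ 2) - (B + d * t))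
      (c / Real.sqrt A - d) 0 := hsq.sub hb
  have hnum : HasDerivAt (fun t : ℝ => (A + 2 * c * t + uu * t ^ 2) ^ 2) (4 * A * c) 0 := by
    have h := ha.pow 2
    refine h.congr_deriv (Eq.symm ?_)
    rw [ha0]; push_cast; ring
  have hden0 : Real.sqrt (A + 2 * c * 0 + uu * 0 ^ 2) - (B + d * 0) = Real.sqrt A - B := by
    rw [ha0]; ring
  have hd2 : HasDerivAt
      (fun t : ℝ => (Real.sqrt (A + 2 * c * t + uu * t ^ 2) - (B + d * t)) ^ 2)
      (2 * (Real.sqrt A - B) * (c / Real.sqrt A - d)) 0 := by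
    have h := hdenD.pow 2
    refine h.congr_deriv (Eq.symm ?_)
    rw [hden0]; push_cast; ring
  have hne : (fun t : ℝ => (Real.sqrt (A + 2 * c * t + uu * t ^ 2) - (B + d * t)) ^ 2) 0 ≠ 0 := by
    show (Real.sqrt (A + 2 * c * 0 + uu * 0 ^ 2) - (B + d * 0)) ^ 2 ≠ 0
    rw [hden0]
    positivity
  have H := hnum.div hd2 hne
  refine H.deriv.trans ?_
  rw [ha0]
  norm_num

theorem matsumotoG_orthonormal_formula
    {V : Type*} [NormedAddCommGroup V] [InnerProductSpace ℝ V] [FiniteDimensional ℝ V]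
    (X : V) (hX : ‖X‖ < 1 / 2) (Y U W : V)
    (hY : ⟪Y, Y⟫ = 1) (hU : ⟪U, U⟫ = 1) (hYU : ⟪Y, U⟫ = 0) :
    matsumotoG X Y W U =
      2 * ⟪W, U⟫ / (1 - ⟪Y, X⟫) ^ 2
      + (1 - ⟪Y, X⟫) ^ (-4 : ℤ) *
        (⟪W, Y⟫ * ⟪U, X⟫ + 3 * ⟪W, X⟫ * ⟪U, X⟫ - ⟪W, U⟫
         + ⟪Y, X⟫ * ⟪W, U⟫ - 4 * ⟪Y, X⟫ * ⟪W, Y⟫ * ⟪U, X⟫) := by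
  have hnY : ‖Y‖ = 1 := by
    have h := real_inner_self_eq_norm_mul_norm Y
    rw [hY] at h
    nlinarith [norm_nonneg Y]
  have habs : |⟪X, Y⟫| < 1/2 := by
    calc |⟪X, Y⟫| ≤ ‖X‖ * ‖Y‖ := abs_real_inner_le_norm X Y
    _ = ‖X‖ := by rw [hnY, mul_one]
    _ < 1/2 := hX
  have hr1 : (0:ℝ) < 1 - ⟪X, Y⟫ := by
    have := abs_lt.mp habs; linarith
  rw [real_inner_comm Y W, real_inner_comm X U, real_inner_comm X Y, real_inner_comm X W]
  set p : ℝ := ⟪Y, W⟫ with hpd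
  set q : ℝ := ⟪X, W⟫ with hqd
  set dd : ℝ := ⟪X, U⟫ with hdd
  set rr : ℝ := ⟪X, Y⟫ with hrd
  set w : ℝ := ⟪W, U⟫ with hwd
  set u : ℝ := ⟪W, W⟫ with hud
  have hrr1 : (0:ℝ) < 1 - rr := hr1
  have hφcont : Continuous (fun s : ℝ => 1 + 2*p*s + u*s^2) := by continuity
  have hψcont : Continuous
      (fun s : ℝ => Real.sqrt (1 + 2*p*s + u*s^2) - (rr + q*s)) := by
    exact (Real.continuous_sqrt.comp hφcont).sub (by continuity)
  have hf0 : (1:ℝ) + 2*p*0 + u*0^2 = 1 := by ring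
  have hpsi0 : Real.sqrt (1 + 2*p*0 + u*0^2) - (rr + q*0) = 1 - rr := by
    rw [hf0, Real.sqrt_one]; ring
  have h1ev : ∀ᶠ s in nhds (0:ℝ), 0 < 1 + 2*p*s + u*s^2 := by
    have h0 : (0:ℝ) < 1 + 2*p*0 + u*0^2 := by rw [hf0]; norm_num
    exact hφcont.continuousAt.eventually (eventually_gt_nhds h0)
  have h2ev : ∀ᶠ s in nhds (0:ℝ),
      0 < Real.sqrt (1 + 2*p*s + u*s^2) - (rr + q*s) := by
    have h0 : (0:ℝ) < Real.sqrt (1 + 2*p*0 + u*0^2) - (rr + q*0) := by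
      rw [hpsi0]; exact hrr1
    exact hψcont.continuousAt.eventually (eventually_gt_nhds h0)
  have hEq : (fun s : ℝ => deriv (fun t : ℝ => (matsumotoF X (Y + s • W + t • U)) ^ 2) 0)
      =ᶠ[nhds (0:ℝ)] (fun s : ℝ =>
        (4 * (1 + 2*p*s + u*s^2) * (w*s)
            * (Real.sqrt (1 + 2*p*s + u*s^2) - (rr + q*s)) ^ 2
          - (1 + 2*p*s + u*s^2) ^ 2
            * (2 * (Real.sqrt (1 + 2*p*s + u*s^2) - (rr + q*s))
              * ((w*s) / Real.sqrt (1 + 2*p*s + u*s^2) - dd)))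
        / ((Real.sqrt (1 + 2*p*s + u*s^2) - (rr + q*s)) ^ 2) ^ 2) := by
    filter_upwards [h1ev, h2ev] with s h1 h2
    have e1 : ⟪Y + s • W, Y + s • W⟫ = 1 + 2*p*s + u*s^2 := by
      rw [real_inner_add_add_self, real_inner_smul_right, real_inner_smul_left,
        real_inner_smul_right, hY, ← hpd, ← hud]
      ring
    have e2 : ⟪X, Y + s • W⟫ = rr + q*s := by
      rw [inner_add_right, real_inner_smul_right, ← hrd, ← hqd]
      ring
    have e3 : ⟪Y + s • W, U⟫ = w*s := by
      rw [inner_add_left, real_inner_smul_left, hYU, ← hwd]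
      ring
    exact matsumoto_inner_deriv X (Y + s • W) U e1 e2 e3 hdd.symm hU h1 h2
  rw [matsumotoG, hEq.deriv_eq]
  have hf : HasDerivAt (fun s : ℝ => 1 + 2*p*s + u*s^2) (2*p) 0 := by
    have h := (((hasDerivAt_id' (0:ℝ)).const_mul (2 * p)).const_add 1).add
      ((hasDerivAt_pow 2 (0:ℝ)).const_mul u)
    refine h.congr_deriv (Eq.symm ?_)
    norm_num
  have hS : HasDerivAt (fun s : ℝ => Real.sqrt (1 + 2*p*s + u*s^2)) p 0 := by
    have h := hf.sqrt (by rw [hf0]; norm_num)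
    rw [hf0, Real.sqrt_one] at h
    convert h using 1
    ring
  have hBf : HasDerivAt (fun s : ℝ => rr + q*s) q 0 := by
    simpa using ((hasDerivAt_id' (0:ℝ)).const_mul q).const_add rr
  have hcf : HasDerivAt (fun s : ℝ => w*s) w 0 := by
    simpa using (hasDerivAt_id' (0:ℝ)).const_mul w
  have hpsi : HasDerivAt (fun s : ℝ => Real.sqrt (1 + 2*p*s + u*s^2) - (rr + q*s))
      (p - q) 0 := hS.sub hBf
  have hSne : (fun s : ℝ => Real.sqrt (1 + 2*p*s + u*s^2)) 0 ≠ 0 := by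
    show Real.sqrt (1 + 2*p*0 + u*0^2) ≠ 0
    rw [hf0, Real.sqrt_one]; norm_num
  have hQ : HasDerivAt
      (fun s : ℝ => (w*s) / Real.sqrt (1 + 2*p*s + u*s^2) - dd) w 0 := by
    have h := (hcf.div hS hSne).sub_const dd
    refine h.congr_deriv (Eq.symm ?_)
    show w = (w * Real.sqrt (1 + 2*p*0 + u*0^2) - w*0*p) / Real.sqrt (1 + 2*p*0 + u*0^2) ^ 2
    rw [hf0, Real.sqrt_one]
    norm_num
  have hne2 : (fun s : ℝ =>
      ((Real.sqrt (1 + 2*p*s + u*s^2) - (rr + q*s)) ^ 2) ^ 2) 0 ≠ 0 := by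
    show ((Real.sqrt (1 + 2*p*0 + u*0^2) - (rr + q*0)) ^ 2) ^ 2 ≠ 0
    rw [hpsi0]
    exact pow_ne_zero _ (pow_ne_zero _ (ne_of_gt hrr1))
  have Hd := ((((hf.const_mul 4).mul hcf).mul (hpsi.pow 2)).sub
      ((hf.pow 2).mul ((hpsi.const_mul 2).mul hQ))).div ((hpsi.pow 2).pow 2) hne2
  refine (congrArg (HMul.hMul (1 / 2 : ℝ)) Hd.deriv).trans ?_
  simp only [Pi.mul_apply, Pi.pow_apply, Pi.sub_apply]
  rw [hpsi0]
  simp only [hf0, Real.sqrt_one, mul_zero, zero_mul, zero_div, add_zero, Nat.cast_ofNat,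
    (by norm_num : (2:ℕ) - 1 = 1), pow_one]
  have hz : (1 - rr) ^ (-4 : ℤ) = 1 / (1 - rr)^4 := by
    rw [zpow_neg]
    norm_num
  rw [hz]
  have hne : (1:ℝ) - rr ≠ 0 := ne_of_gt hrr1
  field_simp
  ring
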